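/- Let A be a commutative ℚ-algebra and φ a ring endomorphism of A with φ^i = φ^j for some 1 ≤ i < j. Let M = (1−φ)(A) and let I = {a ∈ A : φ^r(a) = 0 for some r ≥ 1}. Then the radical of M equals the radical of I, where the radical of a subspace V is {a ∈ A : a^m ∈ V for all sufficiently large m}. -/

import Mathlib

open Finset in
lemma powersum_nilp {A : Type*} [CommRing A] [Algebra ℚ A] {d : ℕ} (x : Fin d → A)
    (hx : ∀ m : ℕ, 1 ≤ m → ∑ k, x k ^ m = 0) (k0 : Fin d) : x k0 ^ d = 0 := by
  classical
  rcases subsingleton_or_nontrivial A with hA | hA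
  · exact Subsingleton.elim _ _
  have hpsum : ∀ m : ℕ, MvPolynomial.aeval x (MvPolynomial.psum (Fin d) ℚ m) = ∑ k, x k ^ m := by
    intro m; simp [MvPolynomial.psum]
  have hE : ∀ t : ℕ, 1 ≤ t → MvPolynomial.aeval x (MvPolynomial.esymm (Fin d) ℚ t) = 0 := by
    intro t ht
    have h := congrArg (MvPolynomial.aeval x) (MvPolynomial.mul_esymm_eq_sum (Fin d) ℚ t)
    rw [map_mul, map_mul, map_sum] at h
    have hz : ∀ a ∈ (antidiagonal t).filter (fun a => a.1 < t),
        MvPolynomial.aeval x ((-1 : MvPolynomial (Fin d) ℚ) ^ a.1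
          * MvPolynomial.esymm (Fin d) ℚ a.1 * MvPolynomial.psum (Fin d) ℚ a.2) = 0 := by
      intro a ha
      simp only [mem_filter, Finset.HasAntidiagonal.mem_antidiagonal] at ha
      have h2 : 1 ≤ a.2 := by omega
      rw [map_mul, hpsum, hx a.2 h2, mul_zero]
    rw [Finset.sum_eq_zero hz, mul_zero] at h
    have hcast : (MvPolynomial.aeval x) ((t : MvPolynomial (Fin d) ℚ)) = (t : A) := by
      simp
    rw [hcast] at h
    have hunit : (algebraMap ℚ A ((t : ℚ)⁻¹)) * (t : A) = 1 := by
      have : ((t : ℚ) ≠ 0) := by exact_mod_cast Nat.one_le_iff_ne_zero.mp ht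
      rw [show ((t : A)) = algebraMap ℚ A (t : ℚ) by simp, ← map_mul,
        inv_mul_cancel₀ this, map_one]
    calc MvPolynomial.aeval x (MvPolynomial.esymm (Fin d) ℚ t)
        = (algebraMap ℚ A ((t : ℚ)⁻¹) * (t : A)) *
            MvPolynomial.aeval x (MvPolynomial.esymm (Fin d) ℚ t) := by rw [hunit, one_mul]
      _ = algebraMap ℚ A ((t : ℚ)⁻¹) * ((t : A) *
            MvPolynomial.aeval x (MvPolynomial.esymm (Fin d) ℚ t)) := by ring
      _ = 0 := by rw [h, mul_zero]
  -- pass to multiset esymm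
  set s : Multiset A := Finset.univ.val.map x with hs
  have hcard : Multiset.card s = d := by simp [hs]
  have hse : ∀ t : ℕ, 1 ≤ t → s.esymm t = 0 := by
    intro t ht
    rw [← MvPolynomial.aeval_esymm_eq_multiset_esymm (Fin d) ℚ t x]
    exact hE t ht
  set P : Polynomial A := (s.map fun t => Polynomial.X - Polynomial.C t).prod with hP
  have hdeg : P.natDegree < d + 1 := by
    have h1 : P.natDegree ≤ ((s.map fun t => Polynomial.X - Polynomial.C t).map
        Polynomial.natDegree).sum := Polynomial.natDegree_multiset_prod_le _
    have h2 : ((s.map fun t => Polynomial.X - Polynomial.C t).map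
        Polynomial.natDegree).sum = d := by
      rw [Multiset.map_map]
      simp [Polynomial.natDegree_X_sub_C, Polynomial.natDegree_X, hcard]
    omega
  have hcoeff : ∀ k : ℕ, k < d → P.coeff k = 0 := by
    intro k hk
    rw [hP, Multiset.prod_X_sub_C_coeff s (by omega : k ≤ Multiset.card s), hcard,
      hse (d - k) (by omega), mul_zero]
  have hcoeffd : P.coeff d = 1 := by
    rw [hP, Multiset.prod_X_sub_C_coeff s (by rw [hcard] : d ≤ Multiset.card s), hcard,
      Nat.sub_self, pow_zero, one_mul]
    simp [Multiset.esymm]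
  have heval : P.eval (x k0) = 0 := by
    rw [hP, Polynomial.eval_multiset_prod, Multiset.map_map]
    apply Multiset.prod_eq_zero
    refine Multiset.mem_map.mpr ⟨x k0, ?_, by simp⟩
    exact Multiset.mem_map.mpr ⟨k0, Finset.mem_univ_val _, rfl⟩
  have hsum := Polynomial.eval_eq_sum_range' hdeg (x k0)
  rw [heval, Finset.sum_range_succ, hcoeffd, one_mul,
    Finset.sum_eq_zero (fun k hk => by rw [hcoeff k (Finset.mem_range.mp hk), zero_mul]),
    zero_add] at hsum
  exact hsum.symm

theorem stmt5 (A : Type*) [CommRing A] [Algebra ℚ A] (φ : A →+* A)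
    (i j : ℕ) (hi : 1 ≤ i) (hij : i < j) (hφ : φ ^ i = φ ^ j)
    (M : Set A) (hM : M = Set.range (fun a => a - φ a))
    (I : Set A) (hI : I = {a : A | ∃ r : ℕ, 1 ≤ r ∧ (φ ^ r) a = 0}) :
    {a : A | ∃ N : ℕ, ∀ m ≥ N, a ^ m ∈ M} = {a : A | ∃ N : ℕ, ∀ m ≥ N, a ^ m ∈ I} := by
  set d := j - i with hdd
  have hd1 : 1 ≤ d := by omega
  set N0 := i * d with hN0
  have hN0i : i ≤ N0 := Nat.le_mul_of_pos_right i (by omega)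
  have hN01 : 1 ≤ N0 := Nat.one_le_iff_ne_zero.mpr (Nat.mul_ne_zero (by omega) (by omega))
  have hstep : ∀ t : ℕ, φ ^ (i + t) = φ ^ (j + t) := by
    intro t; rw [pow_add, pow_add, hφ]
  have hstab : ∀ t k : ℕ, φ ^ (i + t) = φ ^ (i + t + k * d) := by
    intro t k
    induction k with
    | zero => simp
    | succ k ih =>
      have e1 : i + t + (k + 1) * d = j + (t + k * d) := by
        have : (k + 1) * d = k * d + d := by ring
        rw [this]
        generalize k * d = K
        omega
      rw [e1, ← hstep (t + k * d)]
      rw [ih]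
      congr 1
      ring
  have hidem : φ ^ N0 = φ ^ (N0 + N0) := by
    have h := hstab (N0 - i) i
    rw [Nat.add_sub_cancel' hN0i] at h
    rw [h]
  have hdshift : φ ^ N0 = φ ^ (N0 + d) := by
    have h := hstab (N0 - i) 1
    rw [Nat.add_sub_cancel' hN0i, one_mul] at h
    exact h
  have happ : ∀ (p q : ℕ) (a : A), (φ ^ (p + q)) a = (φ ^ p) ((φ ^ q) a) := by
    intro p q a; rw [pow_add]; rfl
  have hIiff : ∀ a : A, a ∈ I ↔ (φ ^ N0) a = 0 := by
    intro a
    rw [hI]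
    constructor
    · rintro ⟨r, hr1, hr0⟩
      have h := hstab (N0 - i) r
      rw [Nat.add_sub_cancel' hN0i] at h
      have hrd : r ≤ r * d := Nat.le_mul_of_pos_right r (by omega)
      have e1 : N0 + r * d = (N0 + r * d - r) + r := by
        generalize r * d = K at hrd ⊢
        omega
      rw [h, e1, happ, hr0, map_zero]
    · intro h0
      exact ⟨N0, hN01, h0⟩
  have hsub : ∀ (a : A) (n : ℕ), a - (φ ^ n) a ∈ M := by
    intro a n
    induction n with
    | zero => rw [hM]; exact ⟨0, by simp⟩
    | succ n ih =>
      have h1 : (φ ^ (n + 1)) a = φ ((φ ^ n) a) := by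
        rw [show n + 1 = 1 + n by omega, happ, pow_one]
      have : a - (φ ^ (n + 1)) a = (a - (φ ^ n) a) + ((φ ^ n) a - φ ((φ ^ n) a)) := by
        rw [h1]; ring
      rw [this]
      rw [hM] at ih ⊢
      obtain ⟨b, hb⟩ := ih
      exact ⟨b + (φ ^ n) a, by simp only [map_add]; rw [← hb]; ring⟩
  have htel : ∀ b : A, ∑ k ∈ Finset.range d, (φ ^ k) ((φ ^ N0) b - (φ ^ (N0 + 1)) b) = 0 := by
    intro b
    have : ∀ k, (φ ^ k) ((φ ^ N0) b - (φ ^ (N0 + 1)) b)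
        = (φ ^ (N0 + k)) b - (φ ^ (N0 + (k + 1))) b := by
      intro k
      rw [map_sub]
      congr 1
      · rw [← happ k N0 b]; congr 1; ring
      · rw [← happ k (N0 + 1) b]; congr 1; ring
    simp_rw [this]
    rw [Finset.sum_range_sub' (fun k => (φ ^ (N0 + k)) b) d]
    rw [add_zero, ← hdshift, sub_self]
  ext a
  simp only [Set.mem_setOf_eq]
  constructor
  · rintro ⟨N, hN⟩
    set N' := max N 1 with hN'
    set c := (φ ^ N0) a with hc
    have hsum : ∀ m : ℕ, 1 ≤ m → ∑ k : Fin d, ((φ ^ (k : ℕ)) (c ^ N')) ^ m = 0 := by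
      intro m hm
      have hNm : N ≤ N' * m :=
        le_trans (le_max_left N 1) (Nat.le_mul_of_pos_right N' (by omega))
      have hmem := hN (N' * m) hNm
      rw [hM] at hmem
      obtain ⟨b, hb⟩ := hmem
      have hterm : ∀ k : ℕ, ((φ ^ k) (c ^ N')) ^ m
          = (φ ^ k) ((φ ^ N0) b - (φ ^ (N0 + 1)) b) := by
        intro k
        have hb' : b - φ b = a ^ (N' * m) := hb
        rw [← map_pow, ← pow_mul, hc, ← map_pow, ← hb']
        congr 1
        rw [map_sub]
        congr 1
      calc ∑ k : Fin d, ((φ ^ (k : ℕ)) (c ^ N')) ^ m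
          = ∑ k ∈ Finset.range d, ((φ ^ k) (c ^ N')) ^ m := by
            exact Fin.sum_univ_eq_sum_range (fun k => ((φ ^ k) (c ^ N')) ^ m) d
        _ = ∑ k ∈ Finset.range d, (φ ^ k) ((φ ^ N0) b - (φ ^ (N0 + 1)) b) := by
            exact Finset.sum_congr rfl fun k _ => hterm k
        _ = 0 := htel b
    have hnil := powersum_nilp (fun k : Fin d => (φ ^ (k : ℕ)) (c ^ N')) hsum ⟨0, by omega⟩
    simp only [pow_zero, RingHom.one_def, RingHom.id_apply] at hnil
    rw [← pow_mul] at hnil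
    refine ⟨N' * d, fun m hm => ?_⟩
    rw [hIiff]
    have : (φ ^ N0) (a ^ m) = c ^ m := by rw [hc, map_pow]
    rw [this, ← Nat.add_sub_cancel' hm, pow_add, hnil, zero_mul]
  · rintro ⟨N, hN⟩
    refine ⟨N, fun m hm => ?_⟩
    have h0 := (hIiff (a ^ m)).mp (hN m hm)
    have := hsub (a ^ m) N0
    rwa [h0, sub_zero] at this
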